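/- Saito's criterion (degree form): Let (A,m) be a multiarrangement in K^ℓ and let θ_1,...,θ_ℓ ∈ D(A,m) be homogeneous derivations with det(θ_i(x_j)) = c · Q(A,m) for some nonzero scalar c ∈ K. Then θ_1,...,θ_ℓ form an S-basis of D(A,m), i.e., D(A,m) = ⊕_{i=1}^ℓ S θ_i. -/

import Mathlib

open MvPolynomial Finset

noncomputable section

namespace STpaper

variable {K : Type*} [Field K] {ℓ : ℕ}

/-- The polynomial ring `S = K[x_1,…,x_ℓ]`. -/
abbrev S (K : Type*) [Field K] (ℓ : ℕ) := MvPolynomial (Fin ℓ) K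

/-- The linear form with coefficient vector `a`. -/
def lin (a : Fin ℓ → K) : S K ℓ := ∑ i, C (a i) * X i

/-- A (central) multiarrangement in `K^ℓ`: a finite family of pairwise
non-proportional nonzero linear forms together with positive multiplicities. -/
structure MultiArr (K : Type*) [Field K] (ℓ : ℕ) (ι : Type*) [Fintype ι] where
  α : ι → Fin ℓ → K
  nonzero : ∀ H, α H ≠ 0
  nonprop : ∀ H H', H ≠ H' → ∀ c : K, α H ≠ c • α H'
  m : ι → ℕ
  mpos : ∀ H, 0 < m H

variable {ι : Type*} [Fintype ι]

/-- `|m|`, the total multiplicity. -/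
def MultiArr.size (A : MultiArr K ℓ ι) : ℕ := ∑ H, A.m H

/-- The defining polynomial `Q(A,m) = ∏ α_H^{m(H)}`. -/
def MultiArr.Q (A : MultiArr K ℓ ι) : S K ℓ := ∏ H, lin (A.α H) ^ A.m H

/-- Essential: the linear forms span the dual space. -/
def MultiArr.Essential (A : MultiArr K ℓ ι) : Prop :=
  Submodule.span K (Set.range A.α) = ⊤

/-- Index type for the standard basis of `∧^p Der S`: `p`-element subsets of `Fin ℓ`. -/
abbrev Sub (ℓ p : ℕ) := {s : Finset (Fin ℓ) // s.card = p}

/-- `det (∂_{i_j} f_k)` for the increasing enumeration `i_1 < … < i_p` of `s`. -/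
def detM {p : ℕ} (s : Sub ℓ p) (f : Fin p → S K ℓ) : S K ℓ :=
  Matrix.det (Matrix.of fun j k : Fin p => pderiv (s.1.orderIsoOfFin s.2 j).1 (f k))

/-- Evaluation of a `p`-derivation (given by its coefficients `c`) on the
`p`-tuple of polynomials `f`, as a linear map in `c`. -/
def evalD (p : ℕ) (f : Fin p → S K ℓ) : ((Sub ℓ p) → S K ℓ) →ₗ[S K ℓ] S K ℓ where
  toFun c := ∑ s, c s * detM s f
  map_add' a b := by simp [add_mul, Finset.sum_add_distrib]
  map_smul' r a := by simp [smul_eq_mul, Finset.mul_sum, mul_assoc]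

/-- The logarithmic derivation module `D^p(A,m)`:
`θ ∈ ∧^p Der S` with `θ(α_H, f_2, …, f_p) ∈ S·α_H^{m(H)}` for all `H` and `f_i`. -/
def Dmod (A : MultiArr K ℓ ι) (p : ℕ) : Submodule (S K ℓ) ((Sub ℓ p) → S K ℓ) where
  carrier := {c | ∀ H : ι, ∀ f : Fin p → S K ℓ, ∀ j : Fin p, (j : ℕ) = 0 →
      f j = lin (A.α H) → lin (A.α H) ^ A.m H ∣ evalD p f c}
  add_mem' := fun {a b} ha hb H f j hj hf => by
    rw [map_add]; exact dvd_add (ha H f j hj hf) (hb H f j hj hf)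
  zero_mem' := fun H f j hj hf => by rw [map_zero]; exact dvd_zero _
  smul_mem' := fun r c hc H f j hj hf => by
    rw [map_smul, smul_eq_mul]; exact (hc H f j hj hf).mul_left r

/-- `f` is homogeneous of (integer) degree `e` (for `e < 0` this means `f = 0`). -/
def IsHomogZ (f : S K ℓ) (e : ℤ) : Prop :=
  if 0 ≤ e then f.IsHomogeneous e.toNat else f = 0

lemma IsHomogZ.zero (e : ℤ) : IsHomogZ (0 : S K ℓ) e := by
  unfold IsHomogZ; split <;> simp [MvPolynomial.isHomogeneous_zero]

lemma IsHomogZ.add {f g : S K ℓ} {e : ℤ} (hf : IsHomogZ f e) (hg : IsHomogZ g e) :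
    IsHomogZ (f + g) e := by
  unfold IsHomogZ at *
  by_cases h : 0 ≤ e
  · simp only [if_pos h] at *; exact hf.add hg
  · simp only [if_neg h] at *; simp [hf, hg]

lemma IsHomogZ.ksmul {f : S K ℓ} {e : ℤ} (r : K) (hf : IsHomogZ f e) :
    IsHomogZ (r • f) e := by
  unfold IsHomogZ at *
  by_cases h : 0 ≤ e
  · simp only [if_pos h] at *
    rw [MvPolynomial.smul_eq_C_mul]
    simpa using (MvPolynomial.isHomogeneous_C _ r).mul hf
  · simp only [if_neg h] at *; simp [hf]

/-- A vector `v : κ → S` is homogeneous of degree `e` with respect to the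
degree shifts `sh` (with `deg ∂ = deg dx = 0`). -/
def HomogOfDeg {κ : Type*} (sh : κ → ℤ) (v : κ → S K ℓ) (e : ℤ) : Prop :=
  ∀ j, IsHomogZ (v j) (e - sh j)

/-- The degree-`e` homogeneous component of a graded submodule `M`,
as a `K`-subspace. -/
def MComp {κ : Type*} [Fintype κ] (M : Submodule (S K ℓ) (κ → S K ℓ))
    (sh : κ → ℤ) (e : ℤ) : Submodule K (κ → S K ℓ) where
  carrier := {v | v ∈ M ∧ HomogOfDeg sh v e}
  add_mem' := fun {a b} ha hb =>
    ⟨M.add_mem ha.1 hb.1, fun j => by simpa using (ha.2 j).add (hb.2 j)⟩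
  zero_mem' := ⟨M.zero_mem, fun j => by simpa using IsHomogZ.zero (e - sh j)⟩
  smul_mem' := fun r v hv =>
    ⟨by
      rw [show r • v = (C r : S K ℓ) • v from
        funext fun j => by simp [MvPolynomial.smul_eq_C_mul, smul_eq_mul]]
      exact M.smul_mem _ hv.1,
     fun j => by simpa using IsHomogZ.ksmul r (hv.2 j)⟩

/-- The Hilbert function of a graded submodule (shift `sh`). -/
def HilbFn {κ : Type*} [Fintype κ] (M : Submodule (S K ℓ) (κ → S K ℓ))
    (sh : κ → ℤ) (e : ℤ) : ℕ :=
  Module.finrank K (MComp M sh e)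

/-- The Hilbert series of a graded submodule (standard grading, shift `0`). -/
def hilb {κ : Type*} [Fintype κ] (M : Submodule (S K ℓ) (κ → S K ℓ)) :
    PowerSeries ℤ :=
  PowerSeries.mk fun n => (HilbFn M 0 (n : ℤ) : ℤ)

/-- `v ↦ ∑ v_j • g_j`, the map from a free module determined by generators `g`. -/
def combMap {κ : Type*} {n : ℕ} (g : Fin n → (κ → S K ℓ)) :
    (Fin n → S K ℓ) →ₗ[S K ℓ] (κ → S K ℓ) where
  toFun v := ∑ j, v j • g j
  map_add' a b := by simp [add_smul, Finset.sum_add_distrib]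
  map_smul' r a := by simp [Finset.smul_sum, mul_smul]

/-- The linear map given by the matrix `T`. -/
def matMap {n n' : ℕ} (T : Fin n → Fin n' → S K ℓ) :
    (Fin n' → S K ℓ) →ₗ[S K ℓ] (Fin n → S K ℓ) :=
  combMap (fun b a => T a b)

/-- A finite graded free resolution of a graded submodule `M ⊆ (κ → S)`
(with degree shift `sh` on the ambient free module):
`0 → F_len → ⋯ → F_0 → M → 0`, with `F_i` free with homogeneous generator
degrees `dg i`, homogeneous differentials, and exactness. -/
structure GFR {κ : Type*} [Fintype κ] (sh : κ → ℤ)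
    (M : Submodule (S K ℓ) (κ → S K ℓ)) where
  len : ℕ
  rk : ℕ → ℕ
  tail : ∀ i, len < i → rk i = 0
  dg : (i : ℕ) → Fin (rk i) → ℤ
  gen : Fin (rk 0) → (κ → S K ℓ)
  gen_mem : ∀ j, gen j ∈ M
  gen_hom : ∀ j, HomogOfDeg sh (gen j) (dg 0 j)
  mat : (i : ℕ) → Fin (rk i) → Fin (rk (i + 1)) → S K ℓ
  mat_hom : ∀ i a b, IsHomogZ (mat i a b) (dg (i + 1) b - dg i a)
  range_gen : LinearMap.range (combMap gen) = M
  exact0 : LinearMap.ker (combMap gen) = LinearMap.range (matMap (mat 0))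
  exact_succ : ∀ i, LinearMap.ker (matMap (mat i)) = LinearMap.range (matMap (mat (i + 1)))

/-- Castelnuovo–Mumford regularity bound: `reg M ≤ r` iff `M` admits a finite
graded free resolution with `i`-th generator degrees at most `r + i`. -/
def RegLE {κ : Type*} [Fintype κ] (M : Submodule (S K ℓ) (κ → S K ℓ))
    (sh : κ → ℤ) (r : ℤ) : Prop :=
  ∃ R : GFR sh M, ∀ i (j : Fin (R.rk i)), R.dg i j ≤ r + i

/-- Projective dimension bound: `pd_S M ≤ p`. -/
def PdLE {κ : Type*} [Fintype κ] (M : Submodule (S K ℓ) (κ → S K ℓ))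
    (sh : κ → ℤ) (p : ℕ) : Prop :=
  ∃ R : GFR sh M, R.len ≤ p

/-- The coefficient of `dx_{u}` in `ω ∧ dα` where `α` has coefficient vector `a`,
for a `p`-form with coefficients `ω` and a `(p+1)`-subset `u`; linear in `ω`. -/
def wedgeAt (p : ℕ) (a : Fin ℓ → K) (u : Sub ℓ (p + 1)) :
    ((Sub ℓ p) → S K ℓ) →ₗ[S K ℓ] S K ℓ where
  toFun ω := ∑ i : Fin ℓ, if h : i ∈ u.1 then
      ((-1 : S K ℓ)) ^ ((u.1.filter (· < i)).card) * C (a i) *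
        ω ⟨u.1.erase i, by simp [Finset.card_erase_of_mem h, u.2]⟩
    else 0
  map_add' x y := by
    classical
    simp only [Pi.add_apply]
    rw [← Finset.sum_add_distrib]
    refine Finset.sum_congr rfl fun i _ => ?_
    split_ifs with h
    · ring
    · simp
  map_smul' r x := by
    classical
    simp only [Pi.smul_apply, smul_eq_mul, RingHom.id_apply]
    rw [Finset.mul_sum]
    refine Finset.sum_congr rfl fun i _ => ?_
    split_ifs with h
    · ring
    · simp

/-- `Q(A,m)·Ω^p(A,m)`: the module of logarithmic differential `p`-forms,
cleared of denominators (an honest submodule of `Ω^p_V`).  The grading of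
`Ω^p(A,m)` itself is the grading of this module shifted down by `|m|`. -/
def OmegaQ (A : MultiArr K ℓ ι) (p : ℕ) : Submodule (S K ℓ) ((Sub ℓ p) → S K ℓ) where
  carrier := {ω | ∀ H : ι, ∀ u : Sub ℓ (p + 1),
      lin (A.α H) ^ A.m H ∣ wedgeAt p (A.α H) u ω}
  add_mem' := fun {a b} ha hb H u => by
    rw [map_add]; exact dvd_add (ha H u) (hb H u)
  zero_mem' := fun H u => by rw [map_zero]; exact dvd_zero _
  smul_mem' := fun r ω hω H u => by
    rw [map_smul, smul_eq_mul]; exact (hω H u).mul_left r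

section SaitoAux

variable {K : Type*} [Field K] {ℓ : ℕ} {ι : Type*} [Fintype ι]

lemma lin_coeff (a : Fin ℓ → K) (j : Fin ℓ) :
    MvPolynomial.coeff (Finsupp.single j 1) (lin a) = a j := by
  classical
  simp [lin, MvPolynomial.coeff_sum, coeff_X', Finsupp.single_left_inj (one_ne_zero)]

lemma lin_ne_zero {a : Fin ℓ → K} (ha : a ≠ 0) : lin a ≠ 0 := by
  obtain ⟨j, hj⟩ := Function.ne_iff.mp ha
  intro h
  apply hj
  have := lin_coeff a j
  rw [h] at this
  simpa using this.symm

lemma eval_lin (v : Fin ℓ → K) (a : Fin ℓ → K) : eval v (lin a) = ∑ i, a i * v i := by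
  simp [lin]

lemma pderiv_lin (j : Fin ℓ) (a : Fin ℓ → K) : pderiv j (lin a) = C (a j) := by
  classical
  simp [lin, pderiv_X, Pi.single_apply]

/-- The equivalence between `Fin ℓ` and singletons. -/
def singEquiv (ℓ : ℕ) : Fin ℓ ≃ Sub ℓ 1 where
  toFun j := ⟨{j}, Finset.card_singleton j⟩
  invFun s := (Finset.card_eq_one.mp s.2).choose
  left_inv j := by
    have h := (Finset.card_eq_one.mp (⟨({j} : Finset (Fin ℓ)), Finset.card_singleton j⟩ : Sub ℓ 1).2).choose_spec
    exact (Finset.singleton_injective h.symm)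
  right_inv s := by
    have h := (Finset.card_eq_one.mp s.2).choose_spec
    exact Subtype.ext h.symm

lemma detM_singEquiv (j : Fin ℓ) (f : Fin 1 → S K ℓ) :
    detM (singEquiv ℓ j) f = pderiv j (f 0) := by
  rw [detM, Matrix.det_fin_one]
  have h : (singEquiv ℓ j).1.orderEmbOfFin (singEquiv ℓ j).2 0 = j := by
    have := Finset.orderEmbOfFin_mem (singEquiv ℓ j).1 (singEquiv ℓ j).2 0
    simpa [singEquiv] using this
  simp only [Matrix.of_apply, Finset.coe_orderIsoOfFin_apply, h]

lemma evalD_apply_lin (a : Fin ℓ → K) (c : Sub ℓ 1 → S K ℓ) :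
    evalD 1 (fun _ => lin a) c = ∑ j, C (a j) * c (singEquiv ℓ j) := by
  show (∑ s, c s * detM s (fun _ => lin a)) = _
  rw [← Equiv.sum_comp (singEquiv ℓ) (fun s => c s * detM s (fun _ => lin a))]
  refine Finset.sum_congr rfl fun j _ => ?_
  rw [detM_singEquiv, pderiv_lin, mul_comm]

lemma mem_Dmod_dvd (A : MultiArr K ℓ ι) {c : Sub ℓ 1 → S K ℓ} (hc : c ∈ Dmod A 1) (H : ι) :
    lin (A.α H) ^ A.m H ∣ ∑ j, C (A.α H j) * c (singEquiv ℓ j) := by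
  have := hc H (fun _ => lin (A.α H)) 0 rfl rfl
  rwa [evalD_apply_lin] at this

lemma prime_X_mv (i : Fin ℓ) : Prime (X i : S K ℓ) := by
  classical
  let e : S K ℓ ≃ₐ[K] Polynomial (MvPolynomial {b : Fin ℓ // b ≠ i} K) :=
    (renameEquiv K (Equiv.optionSubtypeNe i)).symm.trans (optionEquivLeft K _)
  have he : e (X i) = Polynomial.X := by
    simp only [e, AlgEquiv.trans_apply, renameEquiv_symm, renameEquiv_apply, rename_X,
      Equiv.optionSubtypeNe_symm_self, optionEquivLeft_X_none]
  rw [← MulEquiv.prime_iff (p := (X i : S K ℓ)) e.toMulEquiv]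
  show Prime (e (X i))
  rw [he]
  exact Polynomial.prime_X

lemma lin_prime {a : Fin ℓ → K} (ha : a ≠ 0) : Prime (lin a) := by
  classical
  obtain ⟨i0, hi0⟩ := Function.ne_iff.mp ha
  simp only [Pi.zero_apply] at hi0
  set g : Fin ℓ → S K ℓ := Function.update (fun j => X j) i0 (lin a) with hg
  set h : Fin ℓ → S K ℓ := Function.update (fun j => X j) i0
    (C (a i0)⁻¹ * (X i0 - ∑ k ∈ Finset.univ.erase i0, C (a k) * X k)) with hh
  have hgi0 : g i0 = lin a := Function.update_self _ _ _
  have hhi0 : h i0 = C (a i0)⁻¹ * (X i0 - ∑ k ∈ Finset.univ.erase i0, C (a k) * X k) :=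
    Function.update_self _ _ _
  have hgne : ∀ k, k ≠ i0 → g k = X k := fun k hk => Function.update_of_ne hk _ _
  have hhne : ∀ k, k ≠ i0 → h k = X k := fun k hk => Function.update_of_ne hk _ _
  have hlin : lin a - ∑ k ∈ Finset.univ.erase i0, C (a k) * X k = C (a i0) * X i0 := by
    rw [lin, ← Finset.add_sum_erase _ _ (Finset.mem_univ i0)]
    ring
  have hgsum : ∀ k ∈ Finset.univ.erase i0, (aeval g) (C (a k) * X k) = C (a k) * X k := by
    intro k hk
    rw [map_mul, aeval_C, aeval_X, hgne k (Finset.ne_of_mem_erase hk), algebraMap_eq]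
  have haeh : (aeval h) (lin a) = X i0 := by
    rw [lin, map_sum, ← Finset.add_sum_erase _ _ (Finset.mem_univ i0)]
    have h1 : ∀ k ∈ Finset.univ.erase i0, (aeval h) (C (a k) * X k) = C (a k) * X k := by
      intro k hk
      rw [map_mul, aeval_C, aeval_X, hhne k (Finset.ne_of_mem_erase hk), algebraMap_eq]
    rw [Finset.sum_congr rfl h1, map_mul, aeval_C, aeval_X, hhi0, algebraMap_eq,
      ← mul_assoc, ← C_mul, mul_inv_cancel₀ hi0, C_1, one_mul]
    ring_nf
  have hcomp1 : (aeval g).comp (aeval h) = AlgHom.id K (S K ℓ) := by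
    apply MvPolynomial.algHom_ext
    intro j
    rw [AlgHom.comp_apply, aeval_X, AlgHom.id_apply]
    by_cases hj : j = i0
    · subst hj
      rw [hhi0, map_mul, map_sub, map_sum, aeval_C, aeval_X, algebraMap_eq, hgi0,
        Finset.sum_congr rfl hgsum, hlin, ← mul_assoc, ← C_mul, inv_mul_cancel₀ hi0, C_1,
        one_mul]
    · rw [hhne j hj, aeval_X, hgne j hj]
  have hcomp2 : (aeval h).comp (aeval g) = AlgHom.id K (S K ℓ) := by
    apply MvPolynomial.algHom_ext
    intro j
    rw [AlgHom.comp_apply, aeval_X, AlgHom.id_apply]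
    by_cases hj : j = i0
    · subst hj
      rw [hgi0]
      exact haeh
    · rw [hgne j hj, aeval_X, hhne j hj]
  let e : S K ℓ ≃ₐ[K] S K ℓ := AlgEquiv.ofAlgHom (aeval g) (aeval h) hcomp1 hcomp2
  have he : e (X i0) = lin a := by
    show (aeval g) (X i0) = lin a
    rw [aeval_X, hgi0]
  rw [← he]
  exact (MulEquiv.prime_iff (p := (X i0 : S K ℓ)) e.toMulEquiv).mpr (prime_X_mv i0)

lemma exists_sep {a b : Fin ℓ → K} (hprop : ∀ c : K, b ≠ c • a) :
    ∃ v : Fin ℓ → K, ∑ i, a i * v i = 0 ∧ ∑ i, b i * v i ≠ 0 := by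
  classical
  by_contra hno
  push_neg at hno
  let fa : (Fin ℓ → K) →ₗ[K] K :=
    { toFun := fun v => ∑ i, a i * v i
      map_add' := fun x y => by simp [mul_add, Finset.sum_add_distrib]
      map_smul' := fun r x => by simp [Finset.mul_sum, mul_left_comm] }
  let fb : (Fin ℓ → K) →ₗ[K] K :=
    { toFun := fun v => ∑ i, b i * v i
      map_add' := fun x y => by simp [mul_add, Finset.sum_add_distrib]
      map_smul' := fun r x => by simp [Finset.mul_sum, mul_left_comm] }
  have hker : ⨅ _ : Fin 1, LinearMap.ker fa ≤ LinearMap.ker fb := by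
    refine le_trans (iInf_le _ 0) ?_
    intro v hv
    exact hno v hv
  have hmem := mem_span_of_iInf_ker_le_ker (L := fun _ : Fin 1 => fa) (K := fb) hker
  rw [Set.range_const, Submodule.mem_span_singleton] at hmem
  obtain ⟨c, hc⟩ := hmem
  apply hprop c
  funext i
  have h1 : fb ((Pi.single i 1 : Fin ℓ → K)) = b i := by simp [fb, Pi.single_apply]
  have h2 : fa ((Pi.single i 1 : Fin ℓ → K)) = a i := by simp [fa, Pi.single_apply]
  have h3 : (c • fa) ((Pi.single i 1 : Fin ℓ → K)) = c * a i := by rw [LinearMap.smul_apply, h2, smul_eq_mul]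
  rw [← hc] at h1
  rw [h3] at h1
  simpa using h1.symm

lemma lin_not_dvd {a b : Fin ℓ → K} (hprop : ∀ c : K, b ≠ c • a) : ¬ (lin a ∣ lin b) := by
  rintro ⟨q, hq⟩
  obtain ⟨v, hva, hvb⟩ := exists_sep hprop
  apply hvb
  have := congrArg (eval v) hq
  rw [eval_lin, map_mul, eval_lin, hva, zero_mul] at this
  exact this

lemma isRelPrime_lin {a b : Fin ℓ → K} (ha : a ≠ 0) (hprop : ∀ c : K, b ≠ c • a) :
    IsRelPrime (lin a) (lin b) := by
  intro d hd1 hd2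
  obtain ⟨e, he⟩ := hd1
  rcases (lin_prime ha).irreducible.isUnit_or_isUnit he with hu | hu
  · exact hu
  · exfalso
    apply lin_not_dvd hprop
    refine dvd_trans ⟨(hu.unit⁻¹ : Units _), ?_⟩ hd2
    rw [he, mul_assoc, IsUnit.mul_val_inv hu, mul_one]

lemma Q_pairwise (A : MultiArr K ℓ ι) :
    Pairwise (Function.onFun IsRelPrime fun H => lin (A.α H) ^ A.m H) := by
  intro H H' hne
  show IsRelPrime (lin (A.α H) ^ A.m H) (lin (A.α H') ^ A.m H')
  exact (isRelPrime_lin (A.nonzero H) (fun c => A.nonprop H' H (Ne.symm hne) c)).pow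

lemma dvd_det (A : MultiArr K ℓ ι) (η : Fin ℓ → Sub ℓ 1 → S K ℓ)
    (h : ∀ i, η i ∈ Dmod A 1) :
    A.Q ∣ Matrix.det (Matrix.of fun i j => η i (singEquiv ℓ j)) := by
  classical
  rw [MultiArr.Q]
  apply Fintype.prod_dvd_of_isRelPrime (Q_pairwise A)
  intro H
  set B : Matrix (Fin ℓ) (Fin ℓ) (S K ℓ) := Matrix.of fun i j => η i (singEquiv ℓ j) with hB
  have hd : ∀ i, lin (A.α H) ^ A.m H ∣ ∑ j, C (A.α H j) * B i j :=
    fun i => mem_Dmod_dvd A (h i) H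
  choose w hw using hd
  obtain ⟨j0, hj0⟩ := Function.ne_iff.mp (A.nonzero H)
  simp only [Pi.zero_apply] at hj0
  have h1 := Matrix.det_updateCol_sum B j0 (fun j => (C (A.α H j) : S K ℓ))
  have h2 : (fun k => ∑ i, (C (A.α H i) : S K ℓ) • B k i)
      = fun k => lin (A.α H) ^ A.m H * w k := by
    funext k
    simp only [smul_eq_mul]
    exact hw k
  rw [h2] at h1
  have h3 : (fun k => lin (A.α H) ^ A.m H * w k) = (lin (A.α H) ^ A.m H) • w := rfl
  rw [h3, Matrix.det_updateCol_smul] at h1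
  have hdvd : lin (A.α H) ^ A.m H ∣ C (A.α H j0) * B.det := by
    rw [smul_eq_mul] at h1
    exact ⟨_, h1.symm⟩
  have h4 := hdvd.mul_left (C (A.α H j0)⁻¹)
  rwa [← mul_assoc, ← C_mul, inv_mul_cancel₀ hj0, C_1, one_mul] at h4

end SaitoAux

/-- Saito's criterion: homogeneous `θ_1,…,θ_ℓ ∈ D(A,m)` whose
coefficient matrix `(θ_i(x_j))` has determinant `c·Q(A,m)`, `c ≠ 0`, form an
`S`-basis of `D(A,m)`. -/
theorem stmt_3 {K : Type*} [Field K] {ℓ : ℕ} {ι : Type*} [Fintype ι]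
    (A : MultiArr K ℓ ι) (θ : Fin ℓ → (Sub ℓ 1 → S K ℓ))
    (hmem : ∀ i, θ i ∈ Dmod A 1)
    (hhom : ∀ i, ∃ d : ℕ, HomogOfDeg (fun _ => 0) (θ i) (d : ℤ))
    (c : K) (hc : c ≠ 0)
    (hdet : Matrix.det (Matrix.of fun i j : Fin ℓ =>
        θ i ⟨{j}, Finset.card_singleton j⟩) = C c * A.Q) :
    LinearIndependent (S K ℓ) θ ∧
      Submodule.span (S K ℓ) (Set.range θ) = Dmod A 1 := by
  classical
  set M : Matrix (Fin ℓ) (Fin ℓ) (S K ℓ) := Matrix.of fun i j => θ i (singEquiv ℓ j) with hM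
  have hdetM : M.det = C c * A.Q := hdet
  have hQ0 : A.Q ≠ 0 := by
    rw [MultiArr.Q]
    exact Finset.prod_ne_zero_iff.mpr fun H _ => pow_ne_zero _ (lin_ne_zero (A.nonzero H))
  have hC0 : (C c : S K ℓ) ≠ 0 := fun h0 => hc (by simpa using (C_injective (Fin ℓ) K) (h0.trans (map_zero C).symm))
  have hdet0 : M.det ≠ 0 := by rw [hdetM]; exact mul_ne_zero hC0 hQ0
  constructor
  · rw [Fintype.linearIndependent_iff]
    intro g hg i
    have hvec : Matrix.vecMul g M = 0 := by
      funext j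
      have h1 := congrFun hg (singEquiv ℓ j)
      simpa [Matrix.vecMul, dotProduct, hM] using h1
    have h2 : Matrix.vecMul (Matrix.vecMul g M) M.adjugate = 0 := by
      rw [hvec, Matrix.zero_vecMul]
    rw [Matrix.vecMul_vecMul, Matrix.mul_adjugate] at h2
    have h4 : M.det * g i = 0 := by
      have h3 := congrFun h2 i
      simpa [Matrix.vecMul, dotProduct, Matrix.smul_apply, Matrix.one_apply, mul_ite,
        Finset.sum_ite_eq, mul_comm] using h3
    exact (mul_eq_zero.mp h4).resolve_left hdet0
  · apply le_antisymm
    · rw [Submodule.span_le]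
      rintro _ ⟨i, rfl⟩
      exact hmem i
    · intro v hv
      set vv : Fin ℓ → S K ℓ := fun j => v (singEquiv ℓ j) with hvv
      have hQdvd : ∀ i, A.Q ∣ (Matrix.transpose M).cramer vv i := by
        intro i
        rw [Matrix.cramer_apply, Matrix.updateCol_transpose, Matrix.det_transpose]
        have hupd : M.updateRow i vv = Matrix.of (fun k j => (Function.update θ i v k) (singEquiv ℓ j)) := by
          funext k j
          by_cases hk : k = i
          · subst hk
            simp [Matrix.updateRow_apply, Function.update_self, hvv]
          · simp [Matrix.updateRow_apply, hk, hM, Function.update_of_ne hk]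
        rw [hupd]
        refine dvd_det A _ fun k => ?_
        by_cases hk : k = i
        · subst hk; rw [Function.update_self]; exact hv
        · rw [Function.update_of_ne hk]; exact hmem k
      choose q hq using hQdvd
      have hmv := (Matrix.transpose M).mulVec_cramer vv
      have key2 : ∀ j, (Matrix.transpose M).mulVec q j = C c * vv j := by
        intro j
        have h5 := congrFun hmv j
        have hL : (Matrix.transpose M).mulVec ((Matrix.transpose M).cramer vv) j = A.Q * (Matrix.transpose M).mulVec q j := by
          simp only [Matrix.mulVec, dotProduct]
          rw [Finset.mul_sum]
          refine Finset.sum_congr rfl fun k _ => ?_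
          rw [hq k]
          ring
        have hR : (Matrix.det (Matrix.transpose M) • vv) j = A.Q * (C c * vv j) := by
          simp only [Pi.smul_apply, smul_eq_mul, Matrix.det_transpose, hdetM]
          ring
        rw [hL, hR] at h5
        exact mul_left_cancel₀ hQ0 h5
      have hvrepr : v = ∑ i, (C c⁻¹ * q i) • θ i := by
        funext s
        obtain ⟨j, rfl⟩ := (singEquiv ℓ).surjective s
        have h6 := key2 j
        simp only [Matrix.mulVec, dotProduct, Matrix.transpose_apply] at h6
        have h7 : (∑ i, (C c⁻¹ * q i) • θ i) (singEquiv ℓ j)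
            = C c⁻¹ * ∑ i, M i j * q i := by
          simp only [Finset.sum_apply, Pi.smul_apply, smul_eq_mul, Finset.mul_sum]
          refine Finset.sum_congr rfl fun k _ => ?_
          simp only [hM, Matrix.of_apply]
          ring
        rw [h7, h6, ← mul_assoc, ← C_mul, inv_mul_cancel₀ hc, C_1, one_mul]
      rw [hvrepr]
      exact Submodule.sum_mem _ fun i _ =>
        Submodule.smul_mem _ _ (Submodule.subset_span ⟨i, rfl⟩)

end STpaper
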